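/- Let μ be a pointwise doubling measure on a separable Hilbert space H, i.e., μ is finite on bounded sets and limsup_{r↓0} μ(B(x,2r))/μ(B(x,r)) < ∞ for μ-a.e. x. Then the restriction of μ to the set {x ∈ H : liminf_{r↓0} μ(B(x,r))/r = 0} is purely unrectifiable: it assigns zero measure to every set f(E) where E ⊂ [0,1] and f : [0,1] → H is Lipschitz. -/

import Mathlib

open MeasureTheory Metric Set ENNReal NNReal Filter

/-- For a pointwise doubling measure `μ` on a separable Hilbert space, the restriction of `μ`
to the set of points of zero lower 1-density is purely unrectifiable: it vanishes on every
Lipschitz image `f(E)` with `E ⊆ [0,1]`. -/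
-- key lemma: the measure of the part of the image with zero lower density and
-- quantified doubling `S n` is zero.
theorem keylem {H : Type*} [NormedAddCommGroup H] [InnerProductSpace ℝ H]
    [SecondCountableTopology H] [CompleteSpace H] [MeasurableSpace H] [BorelSpace H]
    (μ : Measure H)
    (hfin : ∀ (x : H) (r : ℝ), μ (closedBall x r) < ⊤)
    (E : Set ℝ) (hE : E ⊆ Set.Icc 0 1) (f : ℝ → H) (K : ℝ≥0)
    (hf : LipschitzOnWith K f (Set.Icc 0 1)) (n : ℕ) :
    μ (f '' E ∩ {x | Filter.liminf (fun r : ℝ => μ (closedBall x r) / ENNReal.ofReal r)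
        (nhdsWithin 0 (Set.Ioi 0)) = 0}
      ∩ {y | ∀ r : ℝ, 0 < r → r < 1/(n+1) → μ (closedBall y (2*r)) ≤ n * μ (closedBall y r)}) = 0 := by
  classical
  set K' : ℝ := (K : ℝ) + 1 with hK'def
  have hK1 : (1:ℝ) ≤ K' := by
    rw [hK'def]; have := K.coe_nonneg; linarith
  have hK0 : (0:ℝ) < K' := by linarith
  have hf' : ∀ a ∈ Set.Icc (0:ℝ) 1, ∀ b ∈ Set.Icc (0:ℝ) 1, dist (f a) (f b) ≤ K' * dist a b := by
    intro a ha b hb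
    have := hf.dist_le_mul a ha b hb
    nlinarith [dist_nonneg (x := a) (y := b)]
  set A := f '' E ∩ {x | Filter.liminf (fun r : ℝ => μ (closedBall x r) / ENNReal.ofReal r)
        (nhdsWithin 0 (Set.Ioi 0)) = 0}
      ∩ {y | ∀ r : ℝ, 0 < r → r < 1/(n+1) → μ (closedBall y (2*r)) ≤ n * μ (closedBall y r)} with hA
  -- the uniform constant
  set C : ℝ≥0∞ := (n:ℝ≥0∞)^2 * ENNReal.ofReal (K'/2) * ENNReal.ofReal 3 with hC
  have hCne : C ≠ ⊤ :=
    ENNReal.mul_ne_top (ENNReal.mul_ne_top (ENNReal.pow_ne_top (ENNReal.natCast_ne_top n))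
      ENNReal.ofReal_ne_top) ENNReal.ofReal_ne_top
  -- main estimate
  have main : ∀ l : ℝ, 0 < l → μ A ≤ ENNReal.ofReal l * C := by
    intro l hl
    set δ : ℝ := min 1 (1/(2*(n+1))) with hδdef
    have hδpos : 0 < δ := by
      apply lt_min one_pos
      positivity
    have hδ1 : δ ≤ 1 := min_le_left _ _
    have hδ2 : 2 * δ ≤ 1/(n+1) := by
      have h1 : δ ≤ 1/(2*(n+1)) := min_le_right _ _
      have h2 : (2:ℝ) * (1/(2*(n+1))) = 1/(n+1) := by
        field_simp
      linarith
    -- choose radii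
    have hex : ∀ y ∈ A, ∃ r : ℝ, 0 < r ∧ r < δ ∧
        μ (closedBall y r) ≤ ENNReal.ofReal l * ENNReal.ofReal r := by
      intro y hy
      have hden : Filter.liminf (fun r : ℝ => μ (closedBall y r) / ENNReal.ofReal r)
          (nhdsWithin 0 (Set.Ioi 0)) = 0 := hy.1.2
      have hlt : Filter.liminf (fun r : ℝ => μ (closedBall y r) / ENNReal.ofReal r)
          (nhdsWithin 0 (Set.Ioi 0)) < ENNReal.ofReal l := by
        rw [hden]; simpa using hl
      have hfreq : ∃ᶠ r in nhdsWithin (0:ℝ) (Set.Ioi 0),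
          μ (closedBall y r) / ENNReal.ofReal r < ENNReal.ofReal l :=
        frequently_lt_of_liminf_lt (h := hlt)
      have hev : ∀ᶠ r in nhdsWithin (0:ℝ) (Set.Ioi 0), r ∈ Set.Ioo (0:ℝ) δ :=
        Ioo_mem_nhdsGT_of_mem ⟨le_refl _, hδpos⟩
      obtain ⟨r, hr1, hr2⟩ := (hfreq.and_eventually hev).exists
      refine ⟨r, hr2.1, hr2.2, ?_⟩
      have h0 : ENNReal.ofReal r ≠ 0 := by simp [hr2.1]
      have := (ENNReal.div_lt_iff (Or.inl h0) (Or.inl ENNReal.ofReal_ne_top)).1 hr1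
      exact le_of_lt this
    choose! ρ hρpos hρδ hρμ using hex
    -- Vitali
    obtain ⟨u, huA, hdisj, hcov⟩ := Vitali.exists_disjoint_subfamily_covering_enlargement_closedBall
      A id ρ δ (fun a ha => le_of_lt (hρδ a ha)) 4 (by norm_num)
    -- countable
    have hucnt : u.Countable := by
      apply hdisj.countable_of_nonempty_interior
      intro y hy
      have : ball (id y) (ρ y) ⊆ interior (closedBall (id y) (ρ y)) :=
        interior_maximal ball_subset_closedBall isOpen_ball
      exact ⟨id y, this (mem_ball_self (hρpos y (huA hy)))⟩
    -- covering
    have hAcov : A ⊆ ⋃ y ∈ u, closedBall (id y) (4 * ρ y) := by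
      intro a ha
      obtain ⟨b, hb, hsub⟩ := hcov a ha
      exact Set.mem_biUnion hb (hsub (mem_closedBall_self (le_of_lt (hρpos a ha))))
    -- per-ball estimate
    have hball : ∀ y ∈ u, μ (closedBall y (4 * ρ y)) ≤
        (n:ℝ≥0∞)^2 * (ENNReal.ofReal l * ENNReal.ofReal (ρ y)) := by
      intro y hy
      have hyA := huA hy
      have hS := hyA.2
      have h1 : 0 < ρ y := hρpos y hyA
      have h2 : ρ y < δ := hρδ y hyA
      have hr1 : ρ y < 1/(n+1) := by
        have h2' : 2 * ρ y ≤ 1/(n+1) := le_trans (by linarith) hδ2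
        linarith
      have hr2 : 2 * ρ y < 1/(n+1) := lt_of_lt_of_le (by linarith) hδ2
      have e1 : μ (closedBall y (2 * (2 * ρ y))) ≤ n * μ (closedBall y (2 * ρ y)) :=
        hS (2 * ρ y) (by linarith) hr2
      have e2 : μ (closedBall y (2 * ρ y)) ≤ n * μ (closedBall y (ρ y)) :=
        hS (ρ y) h1 hr1
      have e3 : (4 : ℝ) * ρ y = 2 * (2 * ρ y) := by ring
      calc μ (closedBall y (4 * ρ y)) = μ (closedBall y (2 * (2 * ρ y))) := by rw [e3]
        _ ≤ n * μ (closedBall y (2 * ρ y)) := e1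
        _ ≤ n * (n * μ (closedBall y (ρ y))) := by gcongr
        _ = (n:ℝ≥0∞)^2 * μ (closedBall y (ρ y)) := by ring
        _ ≤ (n:ℝ≥0∞)^2 * (ENNReal.ofReal l * ENNReal.ofReal (ρ y)) := by
            gcongr
            exact hρμ y hyA
    -- sum of radii estimate via intervals in ℝ
    have hparam : ∀ y ∈ u, ∃ t ∈ E, f t = y := by
      intro y hy
      exact (huA hy).1.1
    choose! t htE htf using hparam
    set g : H → Set ℝ := fun y => Set.Ioo (t y - ρ y / K') (t y + ρ y / K') with hg
    have hgdisj : u.PairwiseDisjoint g := by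
      intro y hy y' hy' hne
      have hballs : Disjoint (closedBall (id y) (ρ y)) (closedBall (id y') (ρ y')) :=
        hdisj hy hy' hne
      have hdist : ρ y + ρ y' < dist y y' := by
        have := (disjoint_closedBall_closedBall_iff
          (le_of_lt (hρpos y (huA hy))) (le_of_lt (hρpos y' (huA hy')))).1 hballs
        simpa using this
      -- now intervals are disjoint
      show Disjoint (g y) (g y')
      rw [Set.disjoint_left]
      intro s hs hs'
      simp only [hg, Set.mem_Ioo] at hs hs'
      have htt : dist (t y) (t y') < ρ y / K' + ρ y' / K' := by
        rw [Real.dist_eq, abs_lt]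
        constructor <;> nlinarith [hs.1, hs.2, hs'.1, hs'.2]
      have hyy' : dist y y' ≤ K' * dist (t y) (t y') := by
        have h := hf' (t y) (hE (htE y hy)) (t y') (hE (htE y' hy'))
        rwa [htf y hy, htf y' hy'] at h
      have : dist y y' < ρ y + ρ y' := by
        calc dist y y' ≤ K' * dist (t y) (t y') := hyy'
          _ < K' * (ρ y / K' + ρ y' / K') := by
              apply mul_lt_mul_of_pos_left htt hK0
          _ = ρ y + ρ y' := by field_simp
      linarith
    have hgsub : ∀ y ∈ u, g y ⊆ Set.Ioo (-1 : ℝ) 2 := by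
      intro y hy s hs
      simp only [hg, Set.mem_Ioo] at hs ⊢
      have ht01 := hE (htE y hy)
      simp only [Set.mem_Icc] at ht01
      have h1 : 0 < ρ y := hρpos y (huA hy)
      have h2 : ρ y < δ := hρδ y (huA hy)
      have h3 : ρ y / K' ≤ ρ y := by
        rw [div_le_iff₀ hK0]; nlinarith
      constructor <;> nlinarith [hs.1, hs.2]
    have hsum : (∑' y : u, volume (g (y : H))) ≤ ENNReal.ofReal 3 := by
      have := MeasureTheory.measure_biUnion (μ := volume) hucnt hgdisj
        (fun y _ => measurableSet_Ioo)
      calc (∑' y : u, volume (g (y : H))) = volume (⋃ y ∈ u, g y) := this.symm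
        _ ≤ volume (Set.Ioo (-1 : ℝ) 2) := by
            apply measure_mono
            exact Set.iUnion₂_subset hgsub
        _ = ENNReal.ofReal 3 := by
            rw [Real.volume_Ioo]; norm_num
    have hvol : ∀ y ∈ u, ENNReal.ofReal (ρ y) = ENNReal.ofReal (K'/2) * volume (g y) := by
      intro y hy
      have h1 : 0 < ρ y := hρpos y (huA hy)
      simp only [hg, Real.volume_Ioo]
      rw [← ENNReal.ofReal_mul (by positivity)]
      congr 1
      field_simp
      ring
    have hsumρ : (∑' y : u, ENNReal.ofReal (ρ (y : H))) ≤
        ENNReal.ofReal (K'/2) * ENNReal.ofReal 3 := by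
      calc (∑' y : u, ENNReal.ofReal (ρ (y : H)))
          = ∑' y : u, ENNReal.ofReal (K'/2) * volume (g (y : H)) := by
            apply tsum_congr; rintro ⟨y, hy⟩; exact hvol y hy
        _ = ENNReal.ofReal (K'/2) * ∑' y : u, volume (g (y : H)) := ENNReal.tsum_mul_left
        _ ≤ ENNReal.ofReal (K'/2) * ENNReal.ofReal 3 := by gcongr
    -- put it together
    calc μ A ≤ μ (⋃ y ∈ u, closedBall (id y) (4 * ρ y)) := measure_mono hAcov
      _ ≤ ∑' y : u, μ (closedBall (y : H) (4 * ρ (y : H))) := by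
          apply measure_biUnion_le μ hucnt
      _ ≤ ∑' y : u, (n:ℝ≥0∞)^2 * (ENNReal.ofReal l * ENNReal.ofReal (ρ (y : H))) := by
          apply ENNReal.tsum_le_tsum
          rintro ⟨y, hy⟩
          exact hball y hy
      _ = (n:ℝ≥0∞)^2 * ENNReal.ofReal l * ∑' y : u, ENNReal.ofReal (ρ (y : H)) := by
          rw [← ENNReal.tsum_mul_left]
          apply tsum_congr; intro y; ring
      _ ≤ (n:ℝ≥0∞)^2 * ENNReal.ofReal l * (ENNReal.ofReal (K'/2) * ENNReal.ofReal 3) := by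
          gcongr
      _ = ENNReal.ofReal l * C := by rw [hC]; ring
  -- conclude
  have htend : Filter.Tendsto (fun l : ℝ => ENNReal.ofReal l * C)
      (nhdsWithin 0 (Set.Ioi 0)) (nhds 0) := by
    have h1 : Filter.Tendsto (fun l : ℝ => ENNReal.ofReal l)
        (nhdsWithin 0 (Set.Ioi 0)) (nhds 0) := by
      have := (ENNReal.continuous_ofReal.tendsto 0)
      simpa using this.mono_left nhdsWithin_le_nhds
    have := ENNReal.Tendsto.mul_const h1 (Or.inr hCne)
    simpa using this
  have : μ A ≤ 0 := by
    apply ge_of_tendsto htend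
    filter_upwards [self_mem_nhdsWithin] with l hl
    exact main l hl
  exact le_antisymm this zero_le

theorem statement6 {H : Type*} [NormedAddCommGroup H] [InnerProductSpace ℝ H]
    [SecondCountableTopology H] [CompleteSpace H] [MeasurableSpace H] [BorelSpace H]
    (μ : Measure H)
    (hfin : ∀ (x : H) (r : ℝ), μ (closedBall x r) < ⊤)
    (hdoub : ∀ᵐ x ∂μ,
      Filter.limsup (fun r : ℝ => μ (closedBall x (2 * r)) / μ (closedBall x r))
        (nhdsWithin 0 (Set.Ioi 0)) < ⊤)
    (E : Set ℝ) (hE : E ⊆ Set.Icc 0 1) (f : ℝ → H) (K : ℝ≥0)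
    (hf : LipschitzOnWith K f (Set.Icc 0 1)) :
    μ (f '' E ∩ {x | Filter.liminf (fun r : ℝ => μ (closedBall x r) / ENNReal.ofReal r)
        (nhdsWithin 0 (Set.Ioi 0)) = 0}) = 0 := by
  classical
  set D : Set H := {x | Filter.liminf (fun r : ℝ => μ (closedBall x r) / ENNReal.ofReal r)
      (nhdsWithin 0 (Set.Ioi 0)) = 0} with hD
  set S : ℕ → Set H := fun n =>
    {y | ∀ r : ℝ, 0 < r → r < 1/(n+1) → μ (closedBall y (2*r)) ≤ n * μ (closedBall y r)} with hS
  set bad : Set H := {x | ¬ Filter.limsup (fun r : ℝ => μ (closedBall x (2 * r)) / μ (closedBall x r))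
      (nhdsWithin 0 (Set.Ioi 0)) < ⊤} with hbadDef
  have hbad : μ bad = 0 := by
    rw [hbadDef]
    exact hdoub
  have hsub : f '' E ∩ D ⊆ bad ∪ ⋃ n, (f '' E ∩ D ∩ S n) := by
    intro x hx
    by_cases hP : Filter.limsup (fun r : ℝ => μ (closedBall x (2 * r)) / μ (closedBall x r))
        (nhdsWithin 0 (Set.Ioi 0)) < ⊤
    · right
      obtain ⟨c, hc1, hc2⟩ := exists_between hP
      have hev : ∀ᶠ r in nhdsWithin (0:ℝ) (Set.Ioi 0),
          μ (closedBall x (2 * r)) / μ (closedBall x r) < c :=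
        eventually_lt_of_limsup_lt hc1
      rw [eventually_nhdsWithin_iff, Metric.eventually_nhds_iff] at hev
      obtain ⟨ε, hε, hev⟩ := hev
      obtain ⟨n₀, hn₀⟩ := ENNReal.exists_nat_gt hc2.ne
      obtain ⟨n₁, hn₁⟩ := exists_nat_one_div_lt (K := ℝ) hε
      refine Set.mem_iUnion.2 ⟨n₀ + n₁, hx, ?_⟩
      intro r hr hr'
      have hrε : dist r 0 < ε := by
        rw [Real.dist_eq, sub_zero, abs_of_pos hr]
        have h1 : (1:ℝ)/(n₀ + n₁ + 1) ≤ 1/(n₁+1) := by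
          apply one_div_le_one_div_of_le (by positivity)
          push_cast; linarith [Nat.cast_nonneg (α := ℝ) n₀]
        calc r < 1/((n₀ + n₁ : ℕ) + 1) := hr'
          _ ≤ 1/(n₁+1) := by push_cast; push_cast at h1; linarith
          _ < ε := hn₁
      have hlt : μ (closedBall x (2 * r)) / μ (closedBall x r) < c := hev hrε hr
      have hle : μ (closedBall x (2 * r)) / μ (closedBall x r) ≤ ((n₀ + n₁ : ℕ) : ℝ≥0∞) := by
        apply le_of_lt
        calc μ (closedBall x (2 * r)) / μ (closedBall x r) < c := hlt
          _ < (n₀ : ℝ≥0∞) := hn₀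
          _ ≤ ((n₀ + n₁ : ℕ) : ℝ≥0∞) := by
              exact_mod_cast Nat.cast_le.2 (Nat.le_add_right _ _)
      rwa [ENNReal.div_le_iff_le_mul (Or.inr (ENNReal.natCast_ne_top _))
        (Or.inl (hfin x r).ne)] at hle
    · left
      exact hP
  apply le_antisymm _ zero_le
  calc μ (f '' E ∩ D) ≤ μ (bad ∪ ⋃ n, (f '' E ∩ D ∩ S n)) := measure_mono hsub
    _ ≤ μ bad + μ (⋃ n, (f '' E ∩ D ∩ S n)) := measure_union_le _ _
    _ = 0 := by
        rw [hbad, measure_iUnion_null fun n => keylem μ hfin E hE f K hf n]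
        simp
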